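/- Let (Ω, 𝒢, P) be a probability space, let Y be an integrable random variable, let A ∈ 𝒢 with P(A) > 0, and let ℱ ⊆ 𝒢 be a sub-σ-algebra. Then, P-almost surely, E( 1_A · E_A(Y | ℱ) | ℱ ) = E( 1_A · Y | ℱ ), where E_A(· | ℱ) denotes conditional expectation with respect to ℱ under the conditional probability measure P(· | A). -/

import Mathlib

open MeasureTheory ProbabilityTheory

lemma aux_int_cond {Ω : Type*} [𝒢 : MeasurableSpace Ω] (P : Measure Ω)
    {Y : Ω → ℝ} (hY : Integrable Y P) (A : Set Ω) (hA0 : P A ≠ 0) :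
    Integrable Y (P[|A]) := by
  rw [ProbabilityTheory.cond]
  exact (hY.restrict).smul_measure (ENNReal.inv_ne_top.2 hA0)

lemma aux_int_of_cond {Ω : Type*} [𝒢 : MeasurableSpace Ω] (P : Measure Ω)
    {Z : Ω → ℝ} {A : Set Ω} (hA : MeasurableSet A) (hA0 : P A ≠ 0) (hAtop : P A ≠ ⊤)
    (hZ : Integrable Z (P[|A])) : Integrable (A.indicator Z) P := by
  have h := hZ.smul_measure (c := P A) hAtop
  rw [ProbabilityTheory.cond, smul_smul, ENNReal.mul_inv_cancel hA0 hAtop, one_smul] at h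
  exact (integrable_indicator_iff hA).2 h

lemma aux_setIntegral {Ω : Type*} [𝒢 : MeasurableSpace Ω] (P : Measure Ω)
    {Z Y : Ω → ℝ} {A : Set Ω} (hA : MeasurableSet A) (hA0 : P A ≠ 0) (hAtop : P A ≠ ⊤)
    {s : Set Ω} (hs : MeasurableSet s)
    (h : ∫ x in s, Z x ∂(P[|A]) = ∫ x in s, Y x ∂(P[|A])) :
    ∫ x in s, A.indicator Z x ∂P = ∫ x in s, A.indicator Y x ∂P := by
  rw [setIntegral_indicator hA, setIntegral_indicator hA]
  have hres : ∀ f : Ω → ℝ, ∫ x in s, f x ∂(P[|A]) = (P A)⁻¹.toReal * ∫ x in s ∩ A, f x ∂P := by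
    intro f
    rw [ProbabilityTheory.cond, Measure.restrict_smul, integral_smul_measure,
      Measure.restrict_restrict hs, smul_eq_mul]
  rw [hres, hres] at h
  have hne : (P A)⁻¹.toReal ≠ 0 :=
    ENNReal.toReal_ne_zero.2 ⟨ENNReal.inv_ne_zero.2 hAtop, ENNReal.inv_ne_top.2 hA0⟩
  exact mul_left_cancel₀ hne h

/-- For an integrable `Y`, an event `A` with `P(A) > 0`, and a sub-σ-algebra `ℱ`, almost surely
`E(1_A · E_A(Y|ℱ) | ℱ) = E(1_A · Y | ℱ)`, where `E_A(·|ℱ)` is conditional expectation with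
respect to `ℱ` under the conditional probability measure `P(·|A)`. -/
theorem stmt9 {Ω : Type*} [𝒢 : MeasurableSpace Ω] (P : Measure Ω) [IsProbabilityMeasure P]
    (Y : Ω → ℝ) (hY : Integrable Y P) (A : Set Ω) (hA : MeasurableSet A) (hApos : 0 < P A)
    (ℱ : MeasurableSpace Ω) (hℱ : ℱ ≤ 𝒢) :
    ∀ᵐ ω ∂P,
      (P[fun ω' => A.indicator (fun _ => (1 : ℝ)) ω' * ((P[|A])[Y | ℱ]) ω' | ℱ]) ω
        = (P[A.indicator Y | ℱ]) ω := by
  letI _inst : MeasurableSpace Ω := 𝒢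
  have hA0 : P A ≠ 0 := hApos.ne'
  have hAtop : P A ≠ ⊤ := measure_ne_top P A
  set μ := P[|A] with hμ
  haveI : IsProbabilityMeasure μ := cond_isProbabilityMeasure hA0
  set Z : Ω → ℝ := μ[Y | ℱ] with hZ
  have hYμ : Integrable Y μ := aux_int_cond (𝒢 := 𝒢) P hY A hA0
  have hZint : Integrable Z μ := integrable_condExp
  have hZindP : Integrable (A.indicator Z) P := aux_int_of_cond (𝒢 := 𝒢) P hA hA0 hAtop hZint
  have hYindP : Integrable (A.indicator Y) P :=
    aux_int_of_cond (𝒢 := 𝒢) P hA hA0 hAtop (aux_int_cond (𝒢 := 𝒢) P hY A hA0)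
  have hfun : (fun ω' => A.indicator (fun _ => (1 : ℝ)) ω' * Z ω') = A.indicator Z := by
    funext ω'
    by_cases h : ω' ∈ A <;> simp [Set.indicator_of_mem, Set.indicator_of_notMem, h]
  rw [hfun]
  have key : ∀ s, MeasurableSet[ℱ] s →
      ∫ x in s, A.indicator Z x ∂P = ∫ x in s, A.indicator Y x ∂P := fun s hs =>
    aux_setIntegral (𝒢 := 𝒢) P hA hA0 hAtop (hℱ s hs) (setIntegral_condExp hℱ hYμ hs)
  haveI : SigmaFinite (P.trim hℱ) := IsFiniteMeasure.toSigmaFinite _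
  refine ae_eq_condExp_of_forall_setIntegral_eq hℱ hYindP
    (fun s hs _ => ?_) (fun s hs _ => ?_)
    (StronglyMeasurable.aestronglyMeasurable stronglyMeasurable_condExp)
  · exact Integrable.integrableOn integrable_condExp
  rw [setIntegral_condExp hℱ hZindP hs]
  exact key s hs
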